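/- arXiv:2306.10428 — 2 statements merged into one kernel-verified Lean document; each statement's English description precedes it below -/
import Mathlib

section
/- There is a universal constant C > 0 such that for every ε > 0, β ∈ (0,1), and integers d ≥ 1, K ≥ 1, T ≥ 1 (both K and T known to the algorithm), there exists an ε-differentially private (user level) continual-observation set-cardinality mechanism over users [d] with stream length T such that on every set-cardinality stream of length T with total update count at most K, the mechanism has error at most C · min( d, K, √( ε^{-1} · K · log(T/β) ) ) at all time steps with probability at least 1 − β. -/
open MeasureTheory

/-- Base-2 logarithm where the argument is clamped below by 2. -/
noncomputable def log2c (z : ℝ) : ℝ := Real.logb 2 (max z 2)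

/-- An operation of a set-cardinality stream over users `Fin d`: a flag
(`true` = insert, `false` = delete) together with the affected subset. -/
def CardOp (d : ℕ) : Type := Bool × Finset (Fin d)

instance {d : ℕ} : MeasurableSpace (CardOp d) := ⊤

/-- Apply a set-cardinality operation to the maintained set. -/
def CardOp.apply {d : ℕ} (D : Finset (Fin d)) (op : CardOp d) : Finset (Fin d) :=
  if op.1 then D ∪ op.2 else D \ op.2

/-- The maintained set after the first `n` operations of an infinite stream. -/
def DcardN {d : ℕ} (x : ℕ → CardOp d) : ℕ → Finset (Fin d)
  | 0 => ∅
  | n + 1 => CardOp.apply (DcardN x n) (x n)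

/-- The maintained set `D_t` after the first `t+1` operations of a finite
stream (time steps 0-indexed). -/
def Dcard {d T : ℕ} (x : Fin T → CardOp d) (t : Fin T) : Finset (Fin d) :=
  DcardN (fun n => if h : n < T then x ⟨n, h⟩ else ((true, ∅) : CardOp d)) (t.1 + 1)

/-- The total update count of a finite stream: the total number of
(element, time step) pairs such that the element is inserted or deleted at
that time step. -/
def updateCount {d T : ℕ} (x : Fin T → CardOp d) : ℕ :=
  ∑ t : Fin T, (x t).2.card

/-- Two streams are user-level neighboring if removing some single user from
every operation of both streams yields identical streams. -/
def UserNeighboring {d T : ℕ} (x y : Fin T → CardOp d) : Prop :=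
  ∃ i : Fin d, ∀ t : Fin T,
    (x t).1 = (y t).1 ∧ (x t).2.erase i = (y t).2.erase i

/-- A continual-observation set-cardinality mechanism: a measurable assignment
of output distributions to input streams whose outputs up to time `t` depend
only on the first `t` operations. -/
def IsCOMech {d T : ℕ} (M : (Fin T → CardOp d) → Measure (Fin T → ℝ)) : Prop :=
  Measurable M ∧ (∀ x, IsProbabilityMeasure (M x)) ∧
    ∀ (t : Fin T) (x y : Fin T → CardOp d), (∀ s, s ≤ t → x s = y s) →
      (M x).map (fun a (s : {s : Fin T // s ≤ t}) => a s.1) =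
      (M y).map (fun a (s : {s : Fin T // s ≤ t}) => a s.1)

/-- `ε`-differential privacy at user level. -/
def IsUserDP {d T : ℕ} (ε : ℝ)
    (M : (Fin T → CardOp d) → Measure (Fin T → ℝ)) : Prop :=
  ∀ x y, UserNeighboring x y → ∀ S : Set (Fin T → ℝ), MeasurableSet S →
    M x S ≤ ENNReal.ofReal (Real.exp ε) * M y S


open scoped ENNReal

namespace SC


noncomputable def dmass (c : ℝ) (z : ℤ) : ℝ :=
  ((1 - Real.exp (-c)) / (1 + Real.exp (-c))) * (Real.exp (-c)) ^ z.natAbs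

variable {c : ℝ} (hc : 0 < c)

lemma q_pos : 0 < Real.exp (-c) := Real.exp_pos _

lemma q_lt_one (hc : 0 < c) : Real.exp (-c) < 1 := by
  rw [Real.exp_lt_one_iff]; linarith

lemma dmass_nonneg (hc : 0 < c) (z : ℤ) : 0 ≤ dmass c z := by
  have h1 : (0:ℝ) < Real.exp (-c) := Real.exp_pos _
  have h2 : Real.exp (-c) ≤ 1 := by
    rw [Real.exp_le_one_iff]; linarith
  have : 0 ≤ (1 - Real.exp (-c)) / (1 + Real.exp (-c)) := by
    apply div_nonneg <;> linarith
  exact mul_nonneg this (by positivity)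

lemma dmass_hasSum (hc : 0 < c) : HasSum (dmass c) 1 := by
  set q := Real.exp (-c) with hq
  have hq0 : 0 ≤ q := (Real.exp_pos _).le
  have hq1 : q < 1 := q_lt_one hc
  set a := (1 - q) / (1 + q) with ha
  have hpos : HasSum (fun n : ℕ => a * q ^ n) (a * (1 - q)⁻¹) :=
    (hasSum_geometric_of_lt_one hq0 hq1).mul_left a
  have hneg : HasSum (fun n : ℕ => a * q ^ (n + 1)) (a * (1 - q)⁻¹ * q) := by
    have : HasSum (fun n : ℕ => (a * q ^ n) * q) ((a * (1 - q)⁻¹) * q) := hpos.mul_right q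
    convert this using 2 with n
    ring
  have htot : HasSum (fun z : ℤ => Int.rec (fun n : ℕ => a * q ^ n)
      (fun n : ℕ => a * q ^ (n + 1)) z) (a * (1 - q)⁻¹ + a * (1 - q)⁻¹ * q) :=
    HasSum.int_rec hpos hneg
  have heq : (fun z : ℤ => Int.rec (fun n : ℕ => a * q ^ n)
      (fun n : ℕ => a * q ^ (n + 1)) z) = dmass c := by
    funext z
    cases z with
    | ofNat n => rfl
    | negSucc n => rfl
  rw [heq] at htot
  have hsum : a * (1 - q)⁻¹ + a * (1 - q)⁻¹ * q = 1 := by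
    have h1q : (0:ℝ) < 1 - q := by linarith
    have h1q' : (0:ℝ) < 1 + q := by linarith
    rw [ha]; field_simp
  rwa [hsum] at htot

noncomputable def dlap (c : ℝ) (hc : 0 < c) : PMF ℤ :=
  ⟨fun z => ENNReal.ofReal (dmass c z), by
    have h := dmass_hasSum hc
    have hs : Summable (dmass c) := h.summable
    have : (∑' z : ℤ, ENNReal.ofReal (dmass c z)) = ENNReal.ofReal (∑' z : ℤ, dmass c z) :=
      (ENNReal.ofReal_tsum_of_nonneg (fun z => dmass_nonneg hc z) hs).symm
    rw [ENNReal.summable.hasSum_iff, this, h.tsum_eq, ENNReal.ofReal_one]⟩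

lemma dlap_apply (z : ℤ) : dlap c hc z = ENNReal.ofReal (dmass c z) := rfl

/-- likelihood ratio under shift -/
lemma dlap_shift (z w : ℤ) :
    ENNReal.ofReal (Real.exp (-(c * w.natAbs))) * dlap c hc z ≤ dlap c hc (z + w) := by
  rw [dlap_apply, dlap_apply, ← ENNReal.ofReal_mul (Real.exp_nonneg _)]
  apply ENNReal.ofReal_le_ofReal
  unfold dmass
  set q := Real.exp (-c) with hq
  have hq0 : 0 ≤ q := (Real.exp_pos _).le
  have hq1 : q ≤ 1 := le_of_lt (q_lt_one hc)
  have hexp : Real.exp (-(c * w.natAbs)) = q ^ w.natAbs := by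
    rw [hq, ← Real.exp_nat_mul]; ring_nf
  rw [hexp]
  have htri : (z + w).natAbs ≤ z.natAbs + w.natAbs := Int.natAbs_add_le z w
  have hpow : q ^ (z.natAbs + w.natAbs) ≤ q ^ (z + w).natAbs :=
    pow_le_pow_of_le_one hq0 hq1 htri
  have ha : 0 ≤ (1 - q) / (1 + q) := by
    have : (0:ℝ) < q := Real.exp_pos _
    have : (0:ℝ) ≤ 1 - q := by linarith
    positivity
  calc q ^ w.natAbs * ((1 - q) / (1 + q) * q ^ z.natAbs)
      = (1 - q) / (1 + q) * q ^ (z.natAbs + w.natAbs) := by rw [pow_add]; ring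
    _ ≤ (1 - q) / (1 + q) * q ^ (z + w).natAbs := by
        exact mul_le_mul_of_nonneg_left hpow ha

/-- tail bound -/
lemma dlap_tail (B : ℕ) :
    (∑' z : ℤ, if B < z.natAbs then dlap c hc z else 0)
      ≤ ENNReal.ofReal (2 * Real.exp (-(c * (B + 1)))) := by
  set q := Real.exp (-c) with hq
  have hq0 : 0 ≤ q := (Real.exp_pos _).le
  have hq1 : q < 1 := q_lt_one hc
  set a := (1 - q) / (1 + q) with ha
  have ha0 : 0 ≤ a := by
    have h1 : (0:ℝ) < q := Real.exp_pos _
    have : (0:ℝ) ≤ 1 - q := by linarith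
    positivity
  -- real tail sum
  set f : ℤ → ℝ := fun z => if B < z.natAbs then dmass c z else 0 with hf
  have hfpos : HasSum (fun n : ℕ => f (Int.ofNat n)) (a * q ^ (B + 1) * (1 - q)⁻¹) := by
    have key : HasSum (fun n : ℕ => f (Int.ofNat (n + (B + 1))))
        (a * q ^ (B + 1) * (1 - q)⁻¹) := by
      have : (fun n : ℕ => f (Int.ofNat (n + (B + 1)))) =
          fun n : ℕ => (a * q ^ (B + 1)) * q ^ n := by
        funext n
        have h1 : B < (Int.ofNat (n + (B + 1))).natAbs := by
          simp [Int.natAbs_natCast]; omega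
        simp only [hf, if_pos h1]
        unfold dmass
        have hna : (Int.ofNat (n + (B + 1))).natAbs = n + (B + 1) := rfl
        rw [hna, pow_add]
        ring
      rw [this]
      exact (hasSum_geometric_of_lt_one hq0 hq1).mul_left (a * q ^ (B + 1))
    have := (hasSum_nat_add_iff (f := fun m : ℕ => f (Int.ofNat m)) (B + 1)).mp key
    have hz : (∑ i ∈ Finset.range (B + 1), f (Int.ofNat i)) = 0 := by
      apply Finset.sum_eq_zero
      intro i hi
      have : ¬ B < (Int.ofNat i).natAbs := by
        simp only [Finset.mem_range] at hi
        simp [Int.natAbs_natCast]; omega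
      simp only [hf]
      rw [if_neg this]
    rw [hz, add_zero] at this
    exact this
  have hfneg : HasSum (fun n : ℕ => f (Int.negSucc n)) (a * q ^ (B + 1) * (1 - q)⁻¹) := by
    have key : HasSum (fun n : ℕ => f (Int.negSucc (n + B)))
        (a * q ^ (B + 1) * (1 - q)⁻¹) := by
      have : (fun n : ℕ => f (Int.negSucc (n + B))) =
          fun n : ℕ => (a * q ^ (B + 1)) * q ^ n := by
        funext n
        have h1 : B < (Int.negSucc (n + B)).natAbs := by
          simp [Int.natAbs_negSucc]
        simp only [hf, if_pos h1]
        unfold dmass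
        have hna : (Int.negSucc (n + B)).natAbs = n + B + 1 := rfl
        rw [hna, pow_add, pow_add]
        ring
      rw [this]
      exact (hasSum_geometric_of_lt_one hq0 hq1).mul_left (a * q ^ (B + 1))
    have := (hasSum_nat_add_iff (f := fun m : ℕ => f (Int.negSucc m)) B).mp key
    have hz : (∑ i ∈ Finset.range B, f (Int.negSucc i)) = 0 := by
      apply Finset.sum_eq_zero
      intro i hi
      have : ¬ B < (Int.negSucc i).natAbs := by
        simp only [Finset.mem_range] at hi
        simp [Int.natAbs_negSucc]; omega
      simp only [hf]
      rw [if_neg this]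
    rw [hz, add_zero] at this
    exact this
  have htot : HasSum f (a * q ^ (B + 1) * (1 - q)⁻¹ + a * q ^ (B + 1) * (1 - q)⁻¹) := by
    have h := HasSum.int_rec hfpos hfneg
    have heq : (fun z : ℤ => Int.rec (fun n : ℕ => f (Int.ofNat n))
        (fun n : ℕ => f (Int.negSucc n)) z) = f := by
      funext z; cases z with
      | ofNat n => rfl
      | negSucc n => rfl
    rwa [heq] at h
  have hfnn : ∀ z, 0 ≤ f z := by
    intro z; simp only [hf]
    split
    · exact dmass_nonneg hc z
    · exact le_refl 0
  -- bound on the sum value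
  have hval : a * q ^ (B + 1) * (1 - q)⁻¹ + a * q ^ (B + 1) * (1 - q)⁻¹
      ≤ 2 * Real.exp (-(c * (B + 1))) := by
    have hqB : q ^ (B + 1) = Real.exp (-(c * (B + 1))) := by
      rw [hq, ← Real.exp_nat_mul]
      congr 1
      push_cast; ring
    have h1q : (0:ℝ) < 1 - q := by linarith
    have h1q' : (0:ℝ) < 1 + q := by linarith
    have : a * (1 - q)⁻¹ = (1 + q)⁻¹ := by
      rw [ha]; field_simp
    have hb : a * q ^ (B + 1) * (1 - q)⁻¹ = q ^ (B + 1) * (1 + q)⁻¹ := by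
      rw [mul_comm a _, mul_assoc, this]
    rw [hb, hqB]
    have hle : Real.exp (-(c * (B + 1))) * (1 + q)⁻¹ ≤ Real.exp (-(c * (B + 1))) := by
      have h2 : (1 + q)⁻¹ ≤ 1 := by
        rw [inv_le_one_iff₀]; right; linarith
      nlinarith [Real.exp_nonneg (-(c * (B + 1))), Real.exp_pos (-(c * (B + 1)))]
    linarith
  -- back to ENNReal
  have hENN : (∑' z : ℤ, if B < z.natAbs then dlap c hc z else 0)
      = ENNReal.ofReal (∑' z : ℤ, f z) := by
    rw [ENNReal.ofReal_tsum_of_nonneg hfnn htot.summable]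
    congr 1
    funext z
    simp only [hf, dlap_apply]
    split
    · rfl
    · simp
  rw [hENN, htot.tsum_eq]
  exact ENNReal.ofReal_le_ofReal hval


variable {c : ℝ} (hc : 0 < c)

/-- iid product of `n` discrete Laplace variables. -/
noncomputable def pPi (c : ℝ) (hc : 0 < c) : (n : ℕ) → PMF (Fin n → ℤ)
  | 0 => PMF.pure (fun _ => 0)
  | n + 1 => (dlap c hc).bind (fun z => (pPi c hc n).map (Fin.cons z))

lemma map_cons_apply (n : ℕ) (p : PMF (Fin n → ℤ)) (z : ℤ) (f : Fin (n+1) → ℤ) :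
    (p.map (Fin.cons z)) f = if f 0 = z then p (Fin.tail f) else 0 := by
  rw [PMF.map_apply]
  by_cases h : f 0 = z
  · rw [if_pos h]
    have hf : f = Fin.cons z (Fin.tail f) := by
      rw [← h, Fin.cons_self_tail]
    rw [tsum_eq_single (Fin.tail f)]
    · rw [if_pos hf]
    · intro g hg
      rw [if_neg]
      intro hfg
      apply hg
      rw [hfg, Fin.tail_cons]
  · rw [if_neg h]
    rw [tsum_eq_single (Fin.tail f)]
    · rw [if_neg]
      intro hfg
      apply h
      rw [hfg]
      exact Fin.cons_zero _ _
    · intro g hg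
      rw [if_neg]
      intro hfg
      apply h; rw [hfg]; exact Fin.cons_zero _ _

lemma pPi_apply : ∀ (n : ℕ) (f : Fin n → ℤ),
    pPi c hc n f = ∏ i, dlap c hc (f i) := by
  intro n
  induction n with
  | zero =>
    intro f
    rw [Finset.univ_eq_empty, Finset.prod_empty]
    show (PMF.pure _) f = 1
    rw [PMF.pure_apply, if_pos (Subsingleton.elim _ _)]
  | succ n ih =>
    intro f
    show ((dlap c hc).bind (fun z => (pPi c hc n).map (Fin.cons z))) f = _
    rw [PMF.bind_apply]
    have : ∀ z : ℤ, dlap c hc z * ((pPi c hc n).map (Fin.cons z)) f =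
        if f 0 = z then dlap c hc z * pPi c hc n (Fin.tail f) else 0 := by
      intro z
      rw [map_cons_apply]
      split <;> simp
    simp_rw [this]
    rw [tsum_eq_single (f 0)]
    · rw [if_pos rfl, ih, Fin.prod_univ_succ]
      rfl
    · intro z hz
      rw [if_neg (fun h => hz h.symm)]

lemma pPi_shift (n : ℕ) (f g : Fin n → ℤ) :
    ENNReal.ofReal (Real.exp (-(c * ∑ i, ((g i).natAbs : ℝ)))) * pPi c hc n f
      ≤ pPi c hc n (f + g) := by
  rw [pPi_apply hc, pPi_apply hc]
  have h1 : Real.exp (-(c * ∑ i, ((g i).natAbs : ℝ)))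
      = ∏ i, Real.exp (-(c * ((g i).natAbs : ℝ))) := by
    rw [← Real.exp_sum]
    congr 1
    rw [Finset.mul_sum]
    simp [Finset.sum_neg_distrib]
  rw [h1, ENNReal.ofReal_prod_of_nonneg (fun i _ => Real.exp_nonneg _), ← Finset.prod_mul_distrib]
  apply Finset.prod_le_prod' 
  intro i _
  have := dlap_shift hc (f i) (g i)
  simpa using this

/-- probability that all coordinates are bounded -/
lemma pPi_event (B : ℕ) : ∀ n : ℕ,
    (pPi c hc n).toOuterMeasure {f | ∀ i, (f i).natAbs ≤ B}
      = (∑' z : ℤ, if z.natAbs ≤ B then dlap c hc z else 0) ^ n := by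
  intro n
  induction n with
  | zero =>
    rw [pow_zero]
    rw [PMF.toOuterMeasure_apply]
    rw [tsum_eq_single (fun _ => 0)]
    · rw [Set.indicator_of_mem]
      · show (PMF.pure _) _ = 1
        rw [PMF.pure_apply, if_pos (Subsingleton.elim _ _)]
      · intro i; exact absurd i.2 (Nat.not_lt_zero _)
    · intro g hg
      exact absurd (Subsingleton.elim g (fun _ => 0)) hg
  | succ n ih =>
    show ((dlap c hc).bind _).toOuterMeasure _ = _
    rw [PMF.toOuterMeasure_bind_apply]
    have key : ∀ z : ℤ, ((pPi c hc n).map (Fin.cons z)).toOuterMeasure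
        {f : Fin (n+1) → ℤ | ∀ i, (f i).natAbs ≤ B}
        = if z.natAbs ≤ B then
            (pPi c hc n).toOuterMeasure {f | ∀ i, (f i).natAbs ≤ B} else 0 := by
      intro z
      rw [PMF.toOuterMeasure_map_apply]
      by_cases h : z.natAbs ≤ B
      · rw [if_pos h]
        congr 1
        ext g
        simp only [Set.mem_preimage, Set.mem_setOf_eq]
        constructor
        · intro hg i
          have := hg i.succ
          rwa [Fin.cons_succ] at this
        · intro hg i
          refine Fin.cases ?_ ?_ i
          · rwa [Fin.cons_zero]
          · intro j; rw [Fin.cons_succ]; exact hg j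
      · rw [if_neg h]
        convert measure_empty (μ := ((pPi c hc n)).toOuterMeasure)
        ext g
        simp only [Set.mem_preimage, Set.mem_setOf_eq, Set.mem_empty_iff_false, iff_false]
        intro hg
        have := hg 0
        rw [Fin.cons_zero] at this
        exact h this
    simp_rw [key]
    have : ∀ z : ℤ, dlap c hc z * (if z.natAbs ≤ B then
        (pPi c hc n).toOuterMeasure {f | ∀ i, (f i).natAbs ≤ B} else 0)
        = (if z.natAbs ≤ B then dlap c hc z else 0)
            * (pPi c hc n).toOuterMeasure {f | ∀ i, (f i).natAbs ≤ B} := by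
      intro z; split <;> simp
    simp_rw [this]
    rw [ENNReal.tsum_mul_right, ih, pow_succ]
    ring

lemma one_le_pow_add (g t : ℝ≥0∞) (hgt : g + t = 1) (hg : g ≤ 1) :
    ∀ n : ℕ, 1 ≤ g ^ n + n * t := by
  intro n
  induction n with
  | zero => simp
  | succ n ih =>
    have h2 : g ≤ g ^ (n+1) + n * t := by
      calc g = g * 1 := (mul_one g).symm
        _ ≤ g * (g ^ n + n * t) := by exact mul_le_mul_right ih g
        _ = g ^ n * g + g * (n * t) := by ring
        _ ≤ g ^ (n+1) + n * t := by
            apply add_le_add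
            · rw [pow_succ]
            · calc g * (n * t) ≤ 1 * (n * t) := mul_le_mul_left hg _
                _ = n * t := one_mul _
    calc (1:ℝ≥0∞) = g + t := hgt.symm
      _ ≤ (g ^ (n+1) + n * t) + t := add_le_add_left h2 t
      _ = g ^ (n+1) + ((n:ℝ≥0∞) + 1) * t := by ring
      _ = g ^ (n+1) + ((n+1:ℕ):ℝ≥0∞) * t := by push_cast; ring




variable {d T : ℕ}

def pad (x : Fin T → CardOp d) : ℕ → CardOp d :=
  fun n => if h : n < T then x ⟨n, h⟩ else ((true, ∅) : CardOp d)

def nfun (x : Fin T → CardOp d) (u : ℕ) : ℤ := ((DcardN (pad x) u).card : ℤ)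

lemma Dcard_eq (x : Fin T → CardOp d) (t : Fin T) :
    ((Dcard x t).card : ℤ) = nfun x (t.1 + 1) := rfl

/-- number of noise coordinates -/
def NN (T J : ℕ) : ℕ := T + (J + 1) + (J + 1)

def idxν (T J : ℕ) (t : ℕ) (h : t < T) : Fin (NN T J) := ⟨t, by unfold NN; omega⟩
def idxρ (T J : ℕ) (j : ℕ) : Fin (NN T J) := ⟨T + min j J, by unfold NN; omega⟩
def idxη (T J : ℕ) (j : ℕ) : Fin (NN T J) := ⟨T + (J + 1) + min j J, by unfold NN; omega⟩

section Mech

variable (J r : ℕ)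

def stepf (x : Fin T → CardOp d) (R : Fin (NN T J) → ℤ) (t : ℕ) (h : t < T)
    (st : ℤ × ℕ) : ℤ × ℕ :=
  if st.2 < J ∧ (r : ℤ) + R (idxρ T J st.2) ≤
      ((nfun x (t + 1) - st.1).natAbs : ℤ) + R (idxν T J t h) then
    (nfun x (t + 1) + R (idxη T J st.2), st.2 + 1)
  else st

def runf (x : Fin T → CardOp d) (R : Fin (NN T J) → ℤ) : ℕ → ℤ × ℕ
  | 0 => (0, 0)
  | t + 1 => if h : t < T then stepf J r x R t h (runf x R t) else runf x R t

def trig (x : Fin T → CardOp d) (R : Fin (NN T J) → ℤ) (t : ℕ) : Prop :=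
  (runf J r x R (t + 1)).2 = (runf J r x R t).2 + 1

instance (x : Fin T → CardOp d) (R : Fin (NN T J) → ℤ) (t : ℕ) :
    Decidable (trig J r x R t) := by unfold trig; infer_instance

variable {J r}

lemma runf_succ (x : Fin T → CardOp d) (R) {t : ℕ} (h : t < T) :
    runf J r x R (t + 1) = stepf J r x R t h (runf J r x R t) := by
  show (if h : t < T then _ else _) = _
  rw [dif_pos h]

lemma runf_succ_ge (x : Fin T → CardOp d) (R) {t : ℕ} (h : ¬ t < T) :
    runf J r x R (t + 1) = runf J r x R t := by
  show (if h : t < T then _ else _) = _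
  rw [dif_neg h]

/-- case analysis for one step -/
lemma run_cases (x : Fin T → CardOp d) (R) (t : ℕ) :
    (runf J r x R (t + 1) = runf J r x R t ∧ ¬ trig J r x R t) ∨
    (trig J r x R t ∧ ∃ h : t < T, (runf J r x R t).2 < J ∧
      ((r : ℤ) + R (idxρ T J (runf J r x R t).2) ≤
        ((nfun x (t + 1) - (runf J r x R t).1).natAbs : ℤ) + R (idxν T J t h)) ∧
      runf J r x R (t + 1) =
        (nfun x (t + 1) + R (idxη T J (runf J r x R t).2), (runf J r x R t).2 + 1)) := by
  by_cases h : t < T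
  · rw [runf_succ x R h]
    unfold stepf
    split
    · rename_i hcond
      right
      refine ⟨?_, h, hcond.1, hcond.2, ?_⟩
      · unfold trig
        rw [runf_succ x R h]
        unfold stepf
        rw [if_pos hcond]
      · rfl
    · left
      refine ⟨rfl, ?_⟩
      unfold trig
      rw [runf_succ x R h]
      unfold stepf
      rename_i hcond
      rw [if_neg hcond]
      omega
  · left
    rw [runf_succ_ge x R h]
    refine ⟨rfl, ?_⟩
    unfold trig
    rw [runf_succ_ge x R h]
    omega

lemma not_trig_state (x : Fin T → CardOp d) (R) (t : ℕ) (h : ¬ trig J r x R t) :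
    runf J r x R (t + 1) = runf J r x R t := by
  rcases run_cases x R t with ⟨h1, _⟩ | ⟨h1, _⟩
  · exact h1
  · exact absurd h1 h

lemma j_le_self (x : Fin T → CardOp d) (R) : ∀ t, (runf J r x R t).2 ≤ t := by
  intro t
  induction t with
  | zero => exact le_refl 0
  | succ t ih =>
    rcases run_cases x R t with ⟨h1, _⟩ | ⟨h1, _⟩
    · rw [h1]; omega
    · unfold trig at h1; omega

lemma j_le_J (x : Fin T → CardOp d) (R) : ∀ t, (runf J r x R t).2 ≤ J := by
  intro t
  induction t with
  | zero => exact Nat.zero_le J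
  | succ t ih =>
    rcases run_cases x R t with ⟨h1, _⟩ | ⟨h1, ⟨h, hj, _, _⟩⟩
    · rw [h1]; exact ih
    · unfold trig at h1; omega

lemma j_mono (x : Fin T → CardOp d) (R) : ∀ {t u}, t ≤ u →
    (runf J r x R t).2 ≤ (runf J r x R u).2 := by
  intro t u h
  induction u with
  | zero => interval_cases t; exact le_refl _
  | succ u ih =>
    rcases Nat.lt_or_ge t (u+1) with h' | h'
    · have := ih (by omega)
      rcases run_cases x R u with ⟨h1, _⟩ | ⟨h1, _⟩
      · rw [h1]; exact this
      · unfold trig at h1; omega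
    · have : t = u + 1 := by omega
      rw [this]

lemma trig_uniq (x : Fin T → CardOp d) (R) {t u : ℕ}
    (ht : trig J r x R t) (hu : trig J r x R u)
    (hj : (runf J r x R t).2 = (runf J r x R u).2) : t = u := by
  by_contra hne
  rcases Nat.lt_or_ge t u with h | h
  · have h1 : (runf J r x R (t+1)).2 ≤ (runf J r x R u).2 := j_mono x R (by omega)
    unfold trig at ht; omega
  · have h' : u < t := by omega
    have h1 : (runf J r x R (u+1)).2 ≤ (runf J r x R t).2 := j_mono x R (by omega)
    unfold trig at hu; omega

/-- number of triggers equals final budget use -/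
lemma trig_count (x : Fin T → CardOp d) (R) : ∀ u, u ≤ T →
    (∑ t ∈ Finset.range u, (if trig J r x R t then 1 else 0)) = (runf J r x R u).2 := by
  intro u
  induction u with
  | zero => intro _; rfl
  | succ u ih =>
    intro hu
    rw [Finset.sum_range_succ, ih (by omega)]
    rcases run_cases x R u with ⟨h1, h2⟩ | ⟨h1, _⟩
    · rw [if_neg h2, h1]; omega
    · rw [if_pos h1]
      unfold trig at h1
      omega

end Mech

/-- sensitivity of the running count under user-level neighboring -/
lemma erase_apply {i : Fin d} {A B : Finset (Fin d)} {op op' : CardOp d}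
    (hAB : A.erase i = B.erase i) (hf : op.1 = op'.1) (hs : op.2.erase i = op'.2.erase i) :
    (CardOp.apply A op).erase i = (CardOp.apply B op').erase i := by
  have hA : ∀ a : Fin d, a ≠ i → (a ∈ A ↔ a ∈ B) := by
    intro a ha
    constructor <;> intro h
    · have : a ∈ A.erase i := Finset.mem_erase.2 ⟨ha, h⟩
      rw [hAB] at this
      exact (Finset.mem_erase.1 this).2
    · have : a ∈ B.erase i := Finset.mem_erase.2 ⟨ha, h⟩
      rw [← hAB] at this
      exact (Finset.mem_erase.1 this).2
  have hS : ∀ a : Fin d, a ≠ i → (a ∈ op.2 ↔ a ∈ op'.2) := by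
    intro a ha
    constructor <;> intro h
    · have : a ∈ op.2.erase i := Finset.mem_erase.2 ⟨ha, h⟩
      rw [hs] at this
      exact (Finset.mem_erase.1 this).2
    · have : a ∈ op'.2.erase i := Finset.mem_erase.2 ⟨ha, h⟩
      rw [← hs] at this
      exact (Finset.mem_erase.1 this).2
  unfold CardOp.apply
  rw [← hf]
  ext a
  by_cases hai : a = i
  · subst hai
    simp [Finset.mem_erase]
  · split
    · simp only [Finset.mem_erase, Finset.mem_union]
      rw [show ((a ∈ A ∨ a ∈ op.2) ↔ (a ∈ B ∨ a ∈ op'.2)) from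
        by rw [hA a hai, hS a hai]]
    · simp only [Finset.mem_erase, Finset.mem_sdiff]
      rw [show ((a ∈ A ∧ a ∉ op.2) ↔ (a ∈ B ∧ a ∉ op'.2)) from
        by rw [hA a hai, hS a hai]]

lemma sens {x y : Fin T → CardOp d} (hnb : UserNeighboring x y) :
    ∀ u, (nfun x u - nfun y u).natAbs ≤ 1 := by
  obtain ⟨i, hi⟩ := hnb
  have herase : ∀ u, (DcardN (pad x) u).erase i = (DcardN (pad y) u).erase i := by
    intro u
    induction u with
    | zero => rfl
    | succ u ih =>
      show (CardOp.apply _ _).erase i = (CardOp.apply _ _).erase i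
      by_cases h : u < T
      · exact erase_apply ih (by rw [show pad x u = x ⟨u,h⟩ from dif_pos h, show pad y u = y ⟨u,h⟩ from dif_pos h]; exact (hi ⟨u,h⟩).1)
          (by rw [show pad x u = x ⟨u,h⟩ from dif_pos h, show pad y u = y ⟨u,h⟩ from dif_pos h]; exact (hi ⟨u,h⟩).2)
      · exact erase_apply ih (by rw [show pad x u = ((true, ∅) : CardOp d) from dif_neg h, show pad y u = ((true, ∅) : CardOp d) from dif_neg h]) (by rw [show pad x u = ((true, ∅) : CardOp d) from dif_neg h, show pad y u = ((true, ∅) : CardOp d) from dif_neg h])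
  intro u
  set A := DcardN (pad x) u
  set B := DcardN (pad y) u
  have h1 : A.card ≤ B.card + 1 := by
    calc A.card ≤ (A.erase i).card + 1 := by
          by_cases hiA : i ∈ A
          · rw [Finset.card_erase_add_one hiA]
          · rw [Finset.erase_eq_of_notMem hiA]; omega
      _ = (B.erase i).card + 1 := by rw [herase u]
      _ ≤ B.card + 1 := by have := Finset.card_erase_le (s := B) (a := i); omega
  have h2 : B.card ≤ A.card + 1 := by
    calc B.card ≤ (B.erase i).card + 1 := by
          by_cases hiB : i ∈ B
          · rw [Finset.card_erase_add_one hiB]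
          · rw [Finset.erase_eq_of_notMem hiB]; omega
      _ = (A.erase i).card + 1 := by rw [herase u]
      _ ≤ A.card + 1 := by have := Finset.card_erase_le (s := A) (a := i); omega
  have hx : nfun x u = (A.card : ℤ) := rfl
  have hy : nfun y u = (B.card : ℤ) := rfl
  rw [hx, hy]
  omega

section Couple

variable (J r : ℕ) (x y : Fin T → CardOp d)

/-- the value shift for the `j`-th released noisy value -/
def ηsum (R : Fin (NN T J) → ℤ) (j : ℕ) : ℤ :=
  ∑ t ∈ Finset.range T, (if trig J r x R t ∧ (runf J r x R t).2 = j then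
    nfun x (t + 1) - nfun y (t + 1) else 0)

/-- coordinatewise shift applied to the noise vector -/
def σfun (R : Fin (NN T J) → ℤ) : Fin (NN T J) → ℤ := fun i =>
  if i.1 < T then (if trig J r x R i.1 then 2 else 0)
  else if i.1 < T + (J + 1) then 1
  else ηsum J r x y R (i.1 - (T + (J + 1)))

def φfun (R : Fin (NN T J) → ℤ) : Fin (NN T J) → ℤ := R + σfun J r x y R

variable {J r x y}

lemma φ_ν (R) (t : ℕ) (h : t < T) :
    φfun J r x y R (idxν T J t h) = R (idxν T J t h) +
      (if trig J r x R t then 2 else 0) := by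
  show R _ + σfun J r x y R _ = _
  congr 1
  unfold σfun idxν
  simp only []
  rw [if_pos h]

lemma φ_ρ (R) (j : ℕ) :
    φfun J r x y R (idxρ T J j) = R (idxρ T J j) + 1 := by
  show R _ + σfun J r x y R _ = _
  congr 1
  unfold σfun idxρ
  simp only []
  rw [if_neg (by omega), if_pos (by have := Nat.min_le_right j J; omega)]

lemma φ_η (R) (j : ℕ) (hj : j ≤ J) :
    φfun J r x y R (idxη T J j) = R (idxη T J j) + ηsum J r x y R j := by
  show R _ + σfun J r x y R _ = _
  congr 1
  unfold σfun idxη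
  simp only []
  rw [if_neg (by omega), if_neg (by omega)]
  congr 1
  have : min j J = j := min_eq_left hj
  omega

lemma ηsum_at_trig (R) {t : ℕ} (h : t < T) (ht : trig J r x R t) :
    ηsum J r x y R (runf J r x R t).2 = nfun x (t + 1) - nfun y (t + 1) := by
  unfold ηsum
  rw [Finset.sum_eq_single_of_mem t (Finset.mem_range.2 h)]
  · rw [if_pos ⟨ht, rfl⟩]
  · intro u _ hune
    rw [if_neg]
    rintro ⟨h1, h2⟩
    exact hune (trig_uniq x R h1 ht h2)

/-- main coupling lemma: the `y` run on the shifted noise follows the `x` run -/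
lemma couple (hΔ : ∀ u, (nfun x u - nfun y u).natAbs ≤ 1) (R) :
    ∀ t, runf J r y (φfun J r x y R) t = runf J r x R t := by
  intro t
  induction t with
  | zero => rfl
  | succ t ih =>
    by_cases h : t < T
    · rw [runf_succ y _ h, runf_succ x R h, ih]
      set st := runf J r x R t with hst
      unfold stepf
      by_cases hj : st.2 < J
      · have hδ := hΔ (t + 1)
        by_cases hcx : (r : ℤ) + R (idxρ T J st.2) ≤
            ((nfun x (t + 1) - st.1).natAbs : ℤ) + R (idxν T J t h)
        · -- x triggers
          have htrig : trig J r x R t := by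
            unfold trig
            rw [runf_succ x R h]
            unfold stepf
            rw [if_pos ⟨hj, hcx⟩]
          have hcy : (r : ℤ) + φfun J r x y R (idxρ T J st.2) ≤
              ((nfun y (t + 1) - st.1).natAbs : ℤ) + φfun J r x y R (idxν T J t h) := by
            rw [φ_ρ, φ_ν, if_pos htrig]
            omega
          rw [if_pos ⟨hj, hcy⟩, if_pos ⟨hj, hcx⟩]
          rw [φ_η R st.2 (by omega), ηsum_at_trig R h htrig]
          rw [Prod.mk.injEq]
          exact ⟨by ring, rfl⟩
        · -- x does not trigger
          have htrig : ¬ trig J r x R t := by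
            unfold trig
            rw [runf_succ x R h]
            unfold stepf
            rw [if_neg (by rintro ⟨_, hc⟩; exact hcx hc)]
            omega
          have hcy : ¬ ((r : ℤ) + φfun J r x y R (idxρ T J st.2) ≤
              ((nfun y (t + 1) - st.1).natAbs : ℤ) + φfun J r x y R (idxν T J t h)) := by
            rw [φ_ρ, φ_ν, if_neg htrig]
            omega
          rw [if_neg (by rintro ⟨_, hc⟩; exact hcy hc), if_neg (by rintro ⟨_, hc⟩; exact hcx hc)]
      · rw [if_neg (by rintro ⟨h1, _⟩; exact hj h1), if_neg (by rintro ⟨h1, _⟩; exact hj h1)]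
    · rw [runf_succ_ge y _ h, runf_succ_ge x R h, ih]

/-- injectivity of the coupling map -/
lemma φ_inj (hΔ : ∀ u, (nfun x u - nfun y u).natAbs ≤ 1) :
    Function.Injective (φfun J r x y) := by
  intro R₁ R₂ hEq
  have hrun : ∀ t, runf J r x R₁ t = runf J r x R₂ t := by
    intro t
    rw [← couple hΔ R₁ t, hEq, couple hΔ R₂ t]
  have htrig : ∀ t, trig J r x R₁ t ↔ trig J r x R₂ t := by
    intro t
    unfold trig
    rw [hrun t, hrun (t+1)]
  have hσ : σfun J r x y R₁ = σfun J r x y R₂ := by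
    funext i
    unfold σfun
    by_cases h1 : i.1 < T
    · rw [if_pos h1, if_pos h1]
      by_cases ht : trig J r x R₁ i.1
      · rw [if_pos ht, if_pos ((htrig i.1).1 ht)]
      · rw [if_neg ht, if_neg (fun hh => ht ((htrig i.1).2 hh))]
    · rw [if_neg h1, if_neg h1]
      by_cases h2 : i.1 < T + (J+1)
      · rw [if_pos h2, if_pos h2]
      · rw [if_neg h2, if_neg h2]
        unfold ηsum
        apply Finset.sum_congr rfl
        intro t _
        by_cases hc : trig J r x R₁ t ∧ (runf J r x R₁ t).2 = i.1 - (T + (J+1))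
        · rw [if_pos hc, if_pos ⟨(htrig t).1 hc.1, by rw [← hrun t]; exact hc.2⟩]
        · rw [if_neg hc, if_neg (by rintro ⟨ha, hb⟩; exact hc ⟨(htrig t).2 ha, by rw [hrun t]; exact hb⟩)]
  have hEq' : R₁ + σfun J r x y R₁ = R₂ + σfun J r x y R₂ := hEq
  rw [hσ] at hEq'
  exact add_right_cancel hEq'

lemma ηsum_abs (hΔ : ∀ u, (nfun x u - nfun y u).natAbs ≤ 1) (R) (j : ℕ) :
    (ηsum J r x y R j).natAbs ≤ 1 := by
  by_cases hex : ∃ t, t ∈ Finset.range T ∧ trig J r x R t ∧ (runf J r x R t).2 = j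
  · obtain ⟨t₀, ht₀, hc₀⟩ := hex
    unfold ηsum
    rw [Finset.sum_eq_single_of_mem t₀ ht₀]
    · rw [if_pos hc₀]; exact hΔ (t₀+1)
    · intro u _ hune
      rw [if_neg]
      rintro ⟨h1, h2⟩
      exact hune (trig_uniq x R h1 hc₀.1 (by rw [h2, hc₀.2]))
  · unfold ηsum
    rw [Finset.sum_eq_zero]
    · exact Nat.zero_le 1
    · intro u hu
      rw [if_neg]
      rintro ⟨h1, h2⟩
      exact hex ⟨u, hu, h1, h2⟩

/-- total (ℓ1) size of the shift -/
lemma σ_cost (hΔ : ∀ u, (nfun x u - nfun y u).natAbs ≤ 1) (R) :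
    (∑ i, (σfun J r x y R i).natAbs) ≤ 4 * J + 4 := by
  have hsplit : (∑ i : Fin (NN T J), (σfun J r x y R i).natAbs) =
      (∑ i : Fin (T + (J+1)), (σfun J r x y R (Fin.castAdd (J+1) i)).natAbs)
      + (∑ i : Fin (J+1), (σfun J r x y R (Fin.natAdd (T + (J+1)) i)).natAbs) :=
    Fin.sum_univ_add _
  have hsplit2 : (∑ i : Fin (T + (J+1)), (σfun J r x y R (Fin.castAdd (J+1) i)).natAbs) =
      (∑ i : Fin T, (σfun J r x y R (Fin.castAdd (J+1) (Fin.castAdd (J+1) i))).natAbs)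
      + (∑ i : Fin (J+1), (σfun J r x y R (Fin.castAdd (J+1) (Fin.natAdd T i))).natAbs) :=
    Fin.sum_univ_add _
  have hν : ∀ i : Fin T, (σfun J r x y R (Fin.castAdd (J+1) (Fin.castAdd (J+1) i))).natAbs
      = if trig J r x R i.1 then 2 else 0 := by
    intro i
    unfold σfun
    have : ((Fin.castAdd (J+1) (Fin.castAdd (J+1) i)) : Fin (NN T J)).1 = i.1 := rfl
    rw [this, if_pos i.2]
    split <;> rfl
  have hρ : ∀ i : Fin (J+1), (σfun J r x y R (Fin.castAdd (J+1) (Fin.natAdd T i))).natAbs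
      = 1 := by
    intro i
    unfold σfun
    have h1 : ((Fin.castAdd (J+1) (Fin.natAdd T i)) : Fin (NN T J)).1 = T + i.1 := rfl
    rw [h1, if_neg (by omega), if_pos (by have := i.2; omega)]
    rfl
  have hη : ∀ i : Fin (J+1), (σfun J r x y R (Fin.natAdd (T + (J+1)) i)).natAbs ≤ 1 := by
    intro i
    unfold σfun
    have h1 : ((Fin.natAdd (T + (J+1)) i) : Fin (NN T J)).1 = T + (J+1) + i.1 := rfl
    rw [h1, if_neg (by omega), if_neg (by omega)]
    exact ηsum_abs hΔ R _
  have hνsum : (∑ i : Fin T, (σfun J r x y R (Fin.castAdd (J+1) (Fin.castAdd (J+1) i))).natAbs)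
      ≤ 2 * J := by
    calc (∑ i : Fin T, (σfun J r x y R (Fin.castAdd (J+1) (Fin.castAdd (J+1) i))).natAbs)
        = ∑ i : Fin T, (if trig J r x R i.1 then 2 else 0) := by
          apply Finset.sum_congr rfl; intro i _; exact hν i
      _ = ∑ t ∈ Finset.range T, (if trig J r x R t then 2 else 0) :=
          Fin.sum_univ_eq_sum_range (fun t => if trig J r x R t then (2:ℕ) else 0) T
      _ = ∑ t ∈ Finset.range T, 2 * (if trig J r x R t then 1 else 0) := by
          apply Finset.sum_congr rfl; intro i _; split <;> rfl
      _ = 2 * ∑ t ∈ Finset.range T, (if trig J r x R t then 1 else 0) :=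
          (Finset.mul_sum _ _ _).symm
      _ = 2 * (runf J r x R T).2 := by rw [trig_count x R T (le_refl T)]
      _ ≤ 2 * J := by
          have := j_le_J (J := J) (r := r) x R T
          omega
  have hρsum : (∑ i : Fin (J+1), (σfun J r x y R (Fin.castAdd (J+1) (Fin.natAdd T i))).natAbs)
      = J + 1 := by
    rw [Finset.sum_congr rfl (fun i _ => hρ i)]
    simp
  have hηsum : (∑ i : Fin (J+1), (σfun J r x y R (Fin.natAdd (T + (J+1)) i)).natAbs)
      ≤ J + 1 := by
    calc (∑ i : Fin (J+1), (σfun J r x y R (Fin.natAdd (T + (J+1)) i)).natAbs)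
        ≤ ∑ _i : Fin (J+1), 1 := Finset.sum_le_sum (fun i _ => hη i)
      _ = J + 1 := by simp
  omega

end Couple

section Utility

variable {J r : ℕ} (x : Fin T → CardOp d)

/-- total variation of the running count up to time `w` -/
def TVp (w : ℕ) : ℕ := ∑ k ∈ Finset.range w, (nfun x (k + 1) - nfun x k).natAbs

lemma card_apply_le (D : Finset (Fin d)) (op : CardOp d) :
    (CardOp.apply D op).card ≤ D.card + op.2.card ∧
      D.card ≤ (CardOp.apply D op).card + op.2.card := by
  unfold CardOp.apply
  split
  · have h1 := Finset.card_union_le D op.2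
    have h2 := Finset.card_le_card (Finset.subset_union_left : D ⊆ D ∪ op.2)
    omega
  · have h1 := Finset.card_le_card (Finset.sdiff_subset : D \ op.2 ⊆ D)
    have h2 : D ⊆ (D \ op.2) ∪ op.2 := by
      intro a ha
      by_cases h : a ∈ op.2
      · exact Finset.mem_union_right _ h
      · exact Finset.mem_union_left _ (Finset.mem_sdiff.2 ⟨ha, h⟩)
    have h3 := Finset.card_le_card h2
    have h4 := Finset.card_union_le (D \ op.2) op.2
    omega

lemma nfun_step_le (k : ℕ) :
    (nfun x (k + 1) - nfun x k).natAbs ≤ (pad x k).2.card := by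
  have h := card_apply_le (DcardN (pad x) k) (pad x k)
  have hx : nfun x (k+1) = ((CardOp.apply (DcardN (pad x) k) (pad x k)).card : ℤ) := rfl
  have hy : nfun x k = ((DcardN (pad x) k).card : ℤ) := rfl
  rw [hx, hy]
  omega

lemma TVp_le_updateCount : TVp x T ≤ updateCount x := by
  unfold TVp updateCount
  calc (∑ k ∈ Finset.range T, (nfun x (k + 1) - nfun x k).natAbs)
      ≤ ∑ k ∈ Finset.range T, (pad x k).2.card :=
        Finset.sum_le_sum (fun k _ => nfun_step_le x k)
    _ = ∑ t : Fin T, (x t).2.card := by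
        rw [← Fin.sum_univ_eq_sum_range (fun k => (pad x k).2.card) T]
        apply Finset.sum_congr rfl
        intro i _
        rw [show pad x i = x i from dif_pos i.2]
    _ ≤ ∑ t : Fin T, (x t).2.card := le_refl _

lemma TVp_mono {u w : ℕ} (h : u ≤ w) : TVp x u ≤ TVp x w := by
  unfold TVp
  apply Finset.sum_le_sum_of_subset
  intro a ha
  simp only [Finset.mem_range] at *
  omega

lemma tele {u : ℕ} : ∀ {w : ℕ}, u ≤ w →
    TVp x u + (nfun x w - nfun x u).natAbs ≤ TVp x w := by
  intro w
  induction w with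
  | zero =>
    intro h
    have : u = 0 := by omega
    subst this
    simp [TVp]
  | succ w ih =>
    intro h
    by_cases h' : u = w + 1
    · subst h'
      simp
    · have hu : u ≤ w := by omega
      have h1 := ih hu
      have h2 : TVp x (w + 1) = TVp x w + (nfun x (w + 1) - nfun x w).natAbs := by
        unfold TVp
        rw [Finset.sum_range_succ]
      omega

/-- utility invariant along the run -/
lemma invariant {B : ℕ} (R : Fin (NN T J) → ℤ)
    (hE : ∀ i, (R i).natAbs ≤ B) (h3 : 3 * B ≤ r) :
    ∀ t, ∃ u ≤ t, ((runf J r x R t).1 - nfun x u).natAbs ≤ B ∧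
      (runf J r x R t).2 * (r - 3 * B) ≤ TVp x u := by
  intro t
  induction t with
  | zero =>
    refine ⟨0, le_refl 0, ?_, ?_⟩
    · show ((0:ℤ) - nfun x 0).natAbs ≤ B
      have : nfun x 0 = 0 := rfl
      rw [this]
      simp
    · show (0:ℕ) * (r - 3*B) ≤ TVp x 0
      simp
  | succ t ih =>
    obtain ⟨u, hu, h1, h2⟩ := ih
    rcases run_cases x R t with ⟨hsame, _⟩ | ⟨htrig, hT, hj, hcond, hnew⟩
    · exact ⟨u, by omega, by rw [hsame]; exact h1, by rw [hsame]; exact h2⟩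
    · -- trigger at t
      have hρ := hE (idxρ T J (runf J r x R t).2)
      have hν := hE (idxν T J t hT)
      have hη := hE (idxη T J (runf J r x R t).2)
      -- the query must be large
      have hbig : r ≤ (nfun x (t+1) - (runf J r x R t).1).natAbs + 2 * B := by omega
      -- consumption
      have htri : (nfun x (t+1) - nfun x u).natAbs + ((runf J r x R t).1 - nfun x u).natAbs
          ≥ (nfun x (t+1) - (runf J r x R t).1).natAbs := by omega
      have hcons : (r - 3*B) ≤ (nfun x (t+1) - nfun x u).natAbs := by omega
      have htv := tele x (show u ≤ t + 1 by omega)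
      refine ⟨t + 1, le_refl _, ?_, ?_⟩
      · rw [hnew]
        show ((nfun x (t+1) + R (idxη T J (runf J r x R t).2)) - nfun x (t+1)).natAbs ≤ B
        have : (nfun x (t+1) + R (idxη T J (runf J r x R t).2)) - nfun x (t+1)
            = R (idxη T J (runf J r x R t).2) := by ring
        rw [this]
        exact hη
      · rw [hnew]
        show ((runf J r x R t).2 + 1) * (r - 3*B) ≤ TVp x (t+1)
        have hmul : ((runf J r x R t).2 + 1) * (r - 3*B)
            = (runf J r x R t).2 * (r - 3*B) + (r - 3*B) := by ring
        omega

/-- final utility bound in the main regime -/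
lemma utility1 {B K : ℕ} (R : Fin (NN T J) → ℤ)
    (hE : ∀ i, (R i).natAbs ≤ B) (h6 : 6 * B ≤ r) (hr1 : 1 ≤ r)
    (hJ : J = min (4 * K / r + 1) T) (hK : TVp x T ≤ K) :
    ∀ t : Fin T, ((runf J r x R (t.1 + 1)).1 - nfun x (t.1 + 1)).natAbs ≤ r - 1 + 2 * B := by
  intro t
  rcases run_cases x R t.1 with ⟨hsame, hnt⟩ | ⟨htrig, hT, hj, hcond, hnew⟩
  · -- no trigger at step t
    rw [hsame]
    have hjle := j_le_J (J := J) (r := r) x R t.1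
    by_cases hjJ : (runf J r x R t.1).2 < J
    · -- condition failed
      have hcond : ¬ ((r : ℤ) + R (idxρ T J (runf J r x R t.1).2) ≤
          ((nfun x (t.1 + 1) - (runf J r x R t.1).1).natAbs : ℤ) + R (idxν T J t.1 t.2)) := by
        intro hc
        apply hnt
        unfold trig
        rw [runf_succ x R t.2]
        unfold stepf
        rw [if_pos ⟨hjJ, hc⟩]
      have hρ := hE (idxρ T J (runf J r x R t.1).2)
      have hν := hE (idxν T J t.1 t.2)
      omega
    · -- frozen: impossible
      exfalso
      have hjeq : (runf J r x R t.1).2 = J := by omega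
      obtain ⟨u, hu, h1, h2⟩ := invariant (J := J) (r := r) x R hE (by omega) t.1
      have huT : u ≤ T := by have := t.2; omega
      have htv : TVp x u ≤ K := le_trans (TVp_mono x huT) hK
      rw [hjeq] at h2
      -- J * (r - 3B) ≤ K
      rcases Nat.lt_or_ge (4 * K / r + 1) T with hc | hc
      · -- J = 4K/r + 1
        have hJval : J = 4 * K / r + 1 := by omega
        -- 2 * (J * (r - 3B)) ≥ J * r
        have hhalf : 2 * (r - 3 * B) ≥ r := by omega
        have hmul : 2 * (J * (r - 3 * B)) ≥ J * r := by
          calc 2 * (J * (r - 3 * B)) = J * (2 * (r - 3 * B)) := by ring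
            _ ≥ J * r := Nat.mul_le_mul_left J hhalf
        have hJr : 4 * K < J * r := by
          rw [hJval]
          calc 4 * K < r * (4 * K / r + 1) := Nat.lt_mul_div_succ (4 * K) (by omega)
            _ = (4 * K / r + 1) * r := Nat.mul_comm _ _
        omega
      · -- J = T, but j ≤ t < T
        have hJval : J = T := by omega
        have := j_le_self (J := J) (r := r) x R t.1
        have := t.2
        omega
  · -- trigger at step t: fresh value
    rw [hnew]
    have hη := hE (idxη T J (runf J r x R t.1).2)
    have : ((nfun x (t.1+1) + R (idxη T J (runf J r x R t.1).2)) - nfun x (t.1+1))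
        = R (idxη T J (runf J r x R t.1).2) := by ring
    show ((nfun x (t.1+1) + R (idxη T J (runf J r x R t.1).2)) - nfun x (t.1+1)).natAbs ≤ r - 1 + 2*B
    rw [this]
    omega

lemma card_le_sum : ∀ u, (DcardN (pad x) u).card ≤ ∑ k ∈ Finset.range u, (pad x k).2.card := by
  intro u
  induction u with
  | zero => simp [DcardN]
  | succ u ih =>
    have h := card_apply_le (DcardN (pad x) u) (pad x u)
    rw [Finset.sum_range_succ]
    show (CardOp.apply _ _).card ≤ _
    omega

/-- cardinality is bounded by `d` and by the total update count -/
lemma nfun_le_min {K : ℕ} (hK : updateCount x ≤ K) :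
    ∀ u, u ≤ T → (nfun x u).natAbs ≤ min d K := by
  intro u hu
  have hd : (DcardN (pad x) u).card ≤ d := by
    calc (DcardN (pad x) u).card ≤ (Finset.univ : Finset (Fin d)).card := Finset.card_le_univ _
      _ = d := by simp
  have hKb : (DcardN (pad x) u).card ≤ ∑ k ∈ Finset.range u, (pad x k).2.card :=
    card_le_sum x u
  have hsum : (∑ k ∈ Finset.range u, (pad x k).2.card) ≤ updateCount x := by
    calc (∑ k ∈ Finset.range u, (pad x k).2.card)
        ≤ ∑ k ∈ Finset.range T, (pad x k).2.card := by
          apply Finset.sum_le_sum_of_subset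
          intro a ha
          simp only [Finset.mem_range] at *
          omega
      _ = updateCount x := by
          unfold updateCount
          rw [← Fin.sum_univ_eq_sum_range (fun k => (pad x k).2.card) T]
          apply Finset.sum_congr rfl
          intro i _
          rw [show pad x i = x i from dif_pos i.2]
  have : nfun x u = ((DcardN (pad x) u).card : ℤ) := rfl
  rw [this]
  omega

set_option maxHeartbeats 1000000 in
/-- utility in the trivial regime: with a huge threshold the mechanism never fires -/
lemma utility2 {B m : ℕ} (R : Fin (NN T J) → ℤ)
    (hE : ∀ i, (R i).natAbs ≤ B)
    (hm : ∀ u, u ≤ T → (nfun x u).natAbs ≤ m) (hr : m + 2 * B < r) :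
    ∀ t : Fin T, ((runf J r x R (t.1 + 1)).1 - nfun x (t.1 + 1)).natAbs ≤ m := by
  have hrun : ∀ t, t ≤ T → runf J r x R t = (0, 0) := by
    intro t
    induction t with
    | zero => intro _; rfl
    | succ t ih =>
      intro ht
      have h0 := ih (by omega)
      rw [runf_succ x R (show t < T by omega), h0]
      unfold stepf
      rw [if_neg]
      rintro ⟨_, hc⟩
      have hρ := hE (idxρ T J 0)
      have hν := hE (idxν T J t (show t < T by omega))
      have hmb := hm (t+1) (by omega)
      have hc' : (r : ℤ) + R (idxρ T J 0) ≤
          ((nfun x (t+1) - 0).natAbs : ℤ) + R (idxν T J t (show t < T by omega)) := hc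
      rw [sub_zero] at hc'
      omega
  intro t
  rw [hrun (t.1+1) t.2]
  have := hm (t.1+1) t.2
  show ((0:ℤ) - nfun x (t.1+1)).natAbs ≤ m
  rw [zero_sub]
  omega

end Utility

section Online

variable {J r : ℕ}

lemma nfun_prefix {x y : Fin T → CardOp d} {u : ℕ}
    (h : ∀ k, k < u → pad x k = pad y k) : DcardN (pad x) u = DcardN (pad y) u := by
  induction u with
  | zero => rfl
  | succ u ih =>
    show CardOp.apply _ _ = CardOp.apply _ _
    rw [ih (fun k hk => h k (by omega)), h u (by omega)]

lemma run_prefix {x y : Fin T → CardOp d} (R : Fin (NN T J) → ℤ) {t : Fin T}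
    (h : ∀ s : Fin T, s ≤ t → x s = y s) :
    ∀ w, w ≤ t.1 + 1 → runf J r x R w = runf J r y R w := by
  have hpad : ∀ k, k ≤ t.1 → pad x k = pad y k := by
    intro k hk
    unfold pad
    have hkT : k < T := by have := t.2; omega
    exact (dif_pos hkT).trans ((h ⟨k, hkT⟩ hk).trans (show pad y k = y ⟨k, hkT⟩ from dif_pos hkT).symm)
  have hn : ∀ w, w ≤ t.1 + 1 → nfun x w = nfun y w := by
    intro w hw
    unfold nfun
    rw [nfun_prefix (fun k hk => hpad k (by omega))]
  intro w
  induction w with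
  | zero => intro _; rfl
  | succ w ih =>
    intro hw
    by_cases hwT : w < T
    · rw [runf_succ x R hwT, runf_succ y R hwT, ih (by omega)]
      unfold stepf
      rw [hn (w+1) (by omega)]
    · rw [runf_succ_ge x R hwT, runf_succ_ge y R hwT, ih (by omega)]

end Online


end SC

namespace SC

section Assemble

variable {d T : ℕ}

instance : Countable (CardOp d) := inferInstanceAs (Countable (Bool × Finset (Fin d)))
instance : MeasurableSingletonClass (CardOp d) :=
  ⟨fun _ => MeasurableSpace.measurableSet_top⟩

lemma allMeasDom (s : Set (Fin T → CardOp d)) : MeasurableSet s :=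
  s.to_countable.measurableSet

lemma allMeasR {n : ℕ} (s : Set (Fin n → ℤ)) : MeasurableSet s :=
  s.to_countable.measurableSet

/-- the output map of the mechanism -/
noncomputable def Gfun (J r : ℕ) (x : Fin T → CardOp d) (R : Fin (NN T J) → ℤ) :
    Fin T → ℝ := fun t => ((runf J r x R (t.1 + 1)).1 : ℝ)

/-- the mechanism -/
noncomputable def Mech (J r : ℕ) {c : ℝ} (hc : 0 < c) (x : Fin T → CardOp d) :
    Measure (Fin T → ℝ) := ((pPi c hc (NN T J)).map (Gfun J r x)).toMeasure

lemma mech_apply (J r : ℕ) {c : ℝ} (hc : 0 < c) (x : Fin T → CardOp d)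
    {S : Set (Fin T → ℝ)} (hS : MeasurableSet S) :
    Mech J r hc x S = ∑' R, Set.indicator ((Gfun J r x) ⁻¹' S)
      (⇑(pPi c hc (NN T J))) R := by
  unfold Mech
  rw [PMF.toMeasure_apply_eq_toOuterMeasure_apply _ hS,
    PMF.toOuterMeasure_map_apply, PMF.toOuterMeasure_apply]

lemma mech_isCOMech (J r : ℕ) {c : ℝ} (hc : 0 < c) :
    IsCOMech (Mech (d := d) (T := T) J r hc) := by
  refine ⟨?_, ?_, ?_⟩
  · intro s _
    exact allMeasDom _
  · intro x
    unfold Mech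
    infer_instance
  · intro t x y h
    have hπ : Measurable (fun (a : Fin T → ℝ) (s : {s : Fin T // s ≤ t}) => a s.1) :=
      measurable_pi_lambda _ (fun s => measurable_pi_apply s.1)
    have hGmeas : ∀ z : Fin T → CardOp d, Measurable (Gfun (T := T) J r z) :=
      fun z _ _ => allMeasR _
    unfold Mech
    rw [PMF.toMeasure_map _ _ hπ, PMF.toMeasure_map _ _ hπ,
      PMF.map_comp, PMF.map_comp]
    have hfg : ((fun a (s : {s : Fin T // s ≤ t}) => a s.1) ∘ Gfun J r x)
        = ((fun a (s : {s : Fin T // s ≤ t}) => a s.1) ∘ Gfun J r y) := by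
      funext R s
      show ((runf J r x R (s.1.1 + 1)).1 : ℝ) = ((runf J r y R (s.1.1 + 1)).1 : ℝ)
      rw [run_prefix R h (s.1.1 + 1) (by have := s.2; omega)]
    rw [hfg]

lemma ENN_shift_inverse {a b : ℝ≥0∞} {u : ℝ}
    (h : ENNReal.ofReal (Real.exp (-u)) * a ≤ b) :
    a ≤ ENNReal.ofReal (Real.exp u) * b := by
  have h1 : a = ENNReal.ofReal (Real.exp u) * (ENNReal.ofReal (Real.exp (-u)) * a) := by
    rw [← mul_assoc, ← ENNReal.ofReal_mul (Real.exp_nonneg _), ← Real.exp_add]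
    simp
  rw [h1]
  exact mul_le_mul_right h _

lemma mech_dp (J r : ℕ) {c : ℝ} (hc : 0 < c) (ε : ℝ)
    (hcε : c * (4 * J + 4) ≤ ε) :
    IsUserDP ε (Mech (d := d) (T := T) J r hc) := by
  intro x y hnb S hS
  have hΔ := sens hnb
  rw [mech_apply J r hc x hS, mech_apply J r hc y hS]
  set p := pPi c hc (NN T J) with hp
  have key : ∀ R, Set.indicator ((Gfun J r x) ⁻¹' S) (⇑p) R ≤
      ENNReal.ofReal (Real.exp ε) *
        Set.indicator ((Gfun J r y) ⁻¹' S) (⇑p) (φfun J r x y R) := by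
    intro R
    by_cases hR : R ∈ (Gfun J r x) ⁻¹' S
    · rw [Set.indicator_of_mem hR]
      have hmem : φfun J r x y R ∈ (Gfun J r y) ⁻¹' S := by
        show Gfun J r y (φfun J r x y R) ∈ S
        have : Gfun J r y (φfun J r x y R) = Gfun J r x R := by
          funext t
          show ((runf J r y (φfun J r x y R) (t.1+1)).1 : ℝ) = _
          rw [couple hΔ R (t.1 + 1)]
          rfl
        rw [this]
        exact hR
      rw [Set.indicator_of_mem hmem]
      -- mass ratio
      have hshift := pPi_shift hc (NN T J) R (σfun J r x y R)
      have hcost : (∑ i, (((σfun J r x y R) i).natAbs : ℝ)) ≤ 4 * J + 4 := by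
        have h1 := σ_cost (J := J) (r := r) hΔ R
        calc (∑ i, (((σfun J r x y R) i).natAbs : ℝ))
            = ((∑ i, ((σfun J r x y R) i).natAbs : ℕ) : ℝ) := by push_cast; ring
          _ ≤ ((4 * J + 4 : ℕ) : ℝ) := by exact_mod_cast h1
          _ = 4 * (J:ℝ) + 4 := by push_cast; ring
      have hφ : φfun J r x y R = R + σfun J r x y R := rfl
      have h2 : p R ≤ ENNReal.ofReal
          (Real.exp (c * ∑ i, (((σfun J r x y R) i).natAbs : ℝ))) * p (φfun J r x y R) := by
        apply ENN_shift_inverse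
        rw [hφ]
        exact hshift
      calc p R ≤ ENNReal.ofReal
            (Real.exp (c * ∑ i, (((σfun J r x y R) i).natAbs : ℝ))) * p (φfun J r x y R) := h2
        _ ≤ ENNReal.ofReal (Real.exp ε) * p (φfun J r x y R) := by
            apply mul_le_mul_left
            apply ENNReal.ofReal_le_ofReal
            apply Real.exp_le_exp.2
            calc c * ∑ i, (((σfun J r x y R) i).natAbs : ℝ) ≤ c * (4 * J + 4) := by
                  apply mul_le_mul_of_nonneg_left hcost (le_of_lt hc)
              _ ≤ ε := hcε
    · rw [Set.indicator_of_notMem hR]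
      exact zero_le
  calc (∑' R, Set.indicator ((Gfun J r x) ⁻¹' S) (⇑p) R)
      ≤ ∑' R, ENNReal.ofReal (Real.exp ε) *
          Set.indicator ((Gfun J r y) ⁻¹' S) (⇑p) (φfun J r x y R) :=
        ENNReal.tsum_le_tsum key
    _ = ENNReal.ofReal (Real.exp ε) * ∑' R,
          Set.indicator ((Gfun J r y) ⁻¹' S) (⇑p) (φfun J r x y R) :=
        ENNReal.tsum_mul_left
    _ ≤ ENNReal.ofReal (Real.exp ε) * ∑' R,
          Set.indicator ((Gfun J r y) ⁻¹' S) (⇑p) R := by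
        apply mul_le_mul_right
        apply Summable.tsum_le_tsum_of_inj (φfun J r x y) (φ_inj hΔ)
          (fun _ _ => zero_le) (fun _ => le_refl _) ENNReal.summable ENNReal.summable

/-- lower bound on the probability of the good event -/
lemma mech_good (J r B : ℕ) {c : ℝ} (hc : 0 < c) (x : Fin T → CardOp d)
    (Err β : ℝ) (hβ0 : 0 ≤ β)
    (hgood : ∀ R : Fin (NN T J) → ℤ, (∀ i, (R i).natAbs ≤ B) →
      ∀ t : Fin T, |Gfun J r x R t - ((Dcard x t).card : ℝ)| ≤ Err)
    (hnum : (NN T J : ℝ) * (2 * Real.exp (-(c * (B + 1)))) ≤ β) :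
    ENNReal.ofReal (1 - β) ≤
      Mech J r hc x {a | ∀ t : Fin T, |a t - ((Dcard x t).card : ℝ)| ≤ Err} := by
  set S := {a : Fin T → ℝ | ∀ t : Fin T, |a t - ((Dcard x t).card : ℝ)| ≤ Err} with hSdef
  have hS : MeasurableSet S := by
    have : S = ⋂ t : Fin T, {a : Fin T → ℝ | |a t - ((Dcard x t).card : ℝ)| ≤ Err} := by
      ext a; simp [hSdef, Set.mem_iInter]
    rw [this]
    apply MeasurableSet.iInter
    intro t
    have : {a : Fin T → ℝ | |a t - ((Dcard x t).card : ℝ)| ≤ Err}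
        = (fun a : Fin T → ℝ => a t) ⁻¹' {z : ℝ | |z - ((Dcard x t).card : ℝ)| ≤ Err} := rfl
    rw [this]
    apply (measurable_pi_apply t)
    exact measurableSet_le (by fun_prop) measurable_const
  -- the good noise event
  set E := {R : Fin (NN T J) → ℤ | ∀ i, (R i).natAbs ≤ B} with hE
  have hsub : E ⊆ (Gfun J r x) ⁻¹' S := by
    intro R hR
    exact fun t => hgood R hR t
  set g1 := (∑' z : ℤ, if z.natAbs ≤ B then dlap c hc z else 0) with hg1
  set tl := (∑' z : ℤ, if B < z.natAbs then dlap c hc z else 0) with htl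
  have hsum1 : g1 + tl = 1 := by
    rw [hg1, htl, ← ENNReal.tsum_add]
    rw [← PMF.tsum_coe (dlap c hc)]
    apply tsum_congr
    intro z
    by_cases h : z.natAbs ≤ B
    · rw [if_pos h, if_neg (by omega), add_zero]
    · rw [if_neg h, if_pos (by omega), zero_add]
  have hg1le : g1 ≤ 1 := by
    rw [← PMF.tsum_coe (dlap c hc), hg1]
    apply ENNReal.tsum_le_tsum
    intro z
    split
    · exact le_refl _
    · exact zero_le
  have htl_le : tl ≤ ENNReal.ofReal (2 * Real.exp (-(c * (B + 1)))) := dlap_tail hc B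
  have hmain : 1 ≤ g1 ^ (NN T J) + (NN T J) * tl := one_le_pow_add g1 tl hsum1 hg1le _
  have hEbound : ENNReal.ofReal (1 - β) ≤ g1 ^ (NN T J) := by
    have h2 : ((NN T J : ℝ≥0∞)) * tl ≤ ENNReal.ofReal β := by
      calc ((NN T J : ℝ≥0∞)) * tl
          ≤ (NN T J : ℝ≥0∞) * ENNReal.ofReal (2 * Real.exp (-(c * (B + 1)))) :=
            mul_le_mul_right htl_le _
        _ = ENNReal.ofReal ((NN T J : ℝ) * (2 * Real.exp (-(c * (B + 1))))) := by
            rw [← ENNReal.ofReal_natCast (NN T J),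
              ← ENNReal.ofReal_mul (by positivity : (0:ℝ) ≤ ((NN T J : ℕ) : ℝ))]
        _ ≤ ENNReal.ofReal β := ENNReal.ofReal_le_ofReal hnum
    have h3 : 1 ≤ g1 ^ (NN T J) + ENNReal.ofReal β := le_trans hmain (by
      exact add_le_add_right h2 _)
    have h4 : 1 - ENNReal.ofReal β ≤ g1 ^ (NN T J) := tsub_le_iff_right.2 h3
    calc ENNReal.ofReal (1 - β) = ENNReal.ofReal 1 - ENNReal.ofReal β :=
          ENNReal.ofReal_sub 1 hβ0
      _ = 1 - ENNReal.ofReal β := by rw [ENNReal.ofReal_one]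
      _ ≤ g1 ^ (NN T J) := h4
  calc ENNReal.ofReal (1 - β) ≤ g1 ^ (NN T J) := hEbound
    _ = (pPi c hc (NN T J)).toOuterMeasure E := (pPi_event hc B (NN T J)).symm
    _ ≤ (pPi c hc (NN T J)).toOuterMeasure ((Gfun J r x) ⁻¹' S) :=
        (pPi c hc (NN T J)).toOuterMeasure.mono hsub
    _ = Mech J r hc x S := by
        rw [mech_apply J r hc x hS, PMF.toOuterMeasure_apply]

end Assemble

end SC
namespace SC

lemma errcast (a b : ℤ) : |(a:ℝ) - (b:ℝ)| = (((a - b).natAbs : ℕ) : ℝ) := by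
  rw [← Int.cast_sub, ← Int.cast_abs, Int.abs_eq_natAbs, Int.cast_natCast]

lemma numeric_tail {T J B : ℕ} {c β L : ℝ} (hc : 0 < c) (hJT : J ≤ T) (hT : 1 ≤ T)
    (hβ0 : 0 < β) (hL1 : 1 ≤ L) (hlog : Real.log ((T:ℝ)/β) ≤ L * Real.log 2)
    (hcB : 3.5 * L ≤ c * ((B:ℝ) + 1)) :
    (NN T J : ℝ) * (2 * Real.exp (-(c * ((B:ℝ) + 1)))) ≤ β := by
  have hT' : (1:ℝ) ≤ (T:ℝ) := by exact_mod_cast hT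
  have hJT' : (J:ℝ) ≤ (T:ℝ) := by exact_mod_cast hJT
  have hNN : (NN T J : ℝ) ≤ 5 * T := by
    have : (NN T J : ℝ) = (T:ℝ) + ((J:ℝ)+1) + ((J:ℝ)+1) := by
      unfold NN; push_cast; ring
    rw [this]; linarith
  have hTβpos : (0:ℝ) < (T:ℝ)/β := by positivity
  have hlog10 : Real.log (10 * T / β) ≤ 3.5 * L := by
    have h1 : Real.log (10 * (T:ℝ) / β) ≤ Real.log (16 * T / β) := by
      apply Real.log_le_log (by positivity)
      have : (0:ℝ) < (T:ℝ)/β := hTβpos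
      calc 10 * (T:ℝ) / β = 10 * ((T:ℝ)/β) := by ring
        _ ≤ 16 * ((T:ℝ)/β) := by linarith
        _ = 16 * T / β := by ring
    have h2 : Real.log (16 * (T:ℝ) / β) = 4 * Real.log 2 + Real.log ((T:ℝ)/β) := by
      have h16 : (16 : ℝ) * T / β = 16 * ((T:ℝ)/β) := by ring
      rw [h16, Real.log_mul (by norm_num) (ne_of_gt hTβpos)]
      congr 1
      rw [show (16:ℝ) = 2^4 by norm_num, Real.log_pow]
      push_cast; ring
    have hl2 := Real.log_two_lt_d9
    have hl2pos := Real.log_pos (by norm_num : (1:ℝ) < 2)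
    calc Real.log (10 * (T:ℝ) / β) ≤ 4 * Real.log 2 + Real.log ((T:ℝ)/β) := by
          rw [← h2]; exact h1
      _ ≤ 4 * Real.log 2 + L * Real.log 2 := by linarith
      _ = (4 + L) * Real.log 2 := by ring
      _ ≤ 3.5 * L := by nlinarith
  have hexp : Real.exp (-(c * ((B:ℝ) + 1))) ≤ β / (10 * T) := by
    have h1 : Real.exp (-(c * ((B:ℝ) + 1))) ≤ Real.exp (-(Real.log (10 * T / β))) := by
      apply Real.exp_le_exp.2
      have : Real.log (10 * (T:ℝ) / β) ≤ c * ((B:ℝ)+1) := le_trans hlog10 hcB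
      linarith
    have h2 : Real.exp (-(Real.log (10 * (T:ℝ) / β))) = β / (10 * T) := by
      rw [Real.exp_neg, Real.exp_log (by positivity)]
      rw [inv_div]
    rw [h2] at h1
    exact h1
  have hNN0 : (0:ℝ) ≤ (NN T J : ℝ) := Nat.cast_nonneg _
  have hepos : (0:ℝ) ≤ Real.exp (-(c * ((B:ℝ) + 1))) := Real.exp_nonneg _
  calc (NN T J : ℝ) * (2 * Real.exp (-(c * ((B:ℝ) + 1))))
      ≤ (5 * T) * (2 * (β / (10 * T))) := by
        apply mul_le_mul hNN (by linarith) (by linarith) (by linarith)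
    _ = β := by
        field_simp
        ring
  
end SC

set_option maxHeartbeats 2000000 in
open SC in
set_option maxRecDepth 10000 in
theorem set_cardinality_upper_bound_known_K_T :
    ∃ C : ℝ, 0 < C ∧
      ∀ (ε β : ℝ) (d K T : ℕ),
        0 < ε → β ∈ Set.Ioo (0 : ℝ) 1 → 1 ≤ d → 1 ≤ K → 1 ≤ T →
        ∃ M : (Fin T → CardOp d) → Measure (Fin T → ℝ),
          IsCOMech M ∧ IsUserDP ε M ∧
          ∀ x : Fin T → CardOp d, updateCount x ≤ K →
            ENNReal.ofReal (1 - β) ≤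
              M x {a | ∀ t : Fin T, |a t - ((Dcard x t).card : ℝ)| ≤
                C * min (d : ℝ) (min (K : ℝ)
                  (Real.sqrt (ε⁻¹ * (K : ℝ) * log2c ((T : ℝ) / β))))} := by
  refine ⟨4000, by norm_num, ?_⟩
  intro ε β d K T hε hβ hd hK1 hT
  obtain ⟨hβ0, hβ1⟩ := hβ
  have hT' : (0:ℝ) < (T:ℝ) := by exact_mod_cast hT
  have hK' : (0:ℝ) < (K:ℝ) := by exact_mod_cast hK1
  have hd' : (0:ℝ) < (d:ℝ) := by exact_mod_cast hd
  set L := log2c ((T:ℝ)/β) with hLdef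
  have hl2pos := Real.log_pos (by norm_num : (1:ℝ) < 2)
  have hTβpos : (0:ℝ) < (T:ℝ)/β := by positivity
  have hL1 : 1 ≤ L := by
    rw [hLdef]
    unfold log2c
    rw [Real.logb, le_div_iff₀ hl2pos, one_mul]
    exact Real.log_le_log (by norm_num) (le_max_right _ _)
  have hlog : Real.log ((T:ℝ)/β) ≤ L * Real.log 2 := by
    rw [hLdef]
    unfold log2c
    rw [Real.logb, div_mul_cancel₀ _ (ne_of_gt hl2pos)]
    exact Real.log_le_log hTβpos (le_max_left _ _)
  set s := Real.sqrt (ε⁻¹ * (K:ℝ) * L) with hsdef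
  have hsprod_pos : (0:ℝ) < ε⁻¹ * (K:ℝ) * L := by positivity
  have hs0 : 0 < s := Real.sqrt_pos.2 hsprod_pos
  have hs2 : s^2 = ε⁻¹ * (K:ℝ) * L := Real.sq_sqrt (le_of_lt hsprod_pos)
  set m := min d K with hmdef
  have hm1 : 1 ≤ m := by omega
  have hmd : (m:ℝ) ≤ (d:ℝ) := by exact_mod_cast (min_le_left d K)
  have hmK : (m:ℝ) ≤ (K:ℝ) := by exact_mod_cast (min_le_right d K)
  set min3 := min (d:ℝ) (min (K:ℝ) s) with hmin3def
  have hmin3_0 : 0 ≤ min3 := le_min hd'.le (le_min hK'.le hs0.le)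
  rcases le_or_gt (m:ℝ) s with hms | hsm
  · -- CASE A : trivial constant mechanism regime
    set c := ε/8 with hcdef
    have hc : 0 < c := by positivity
    set B := ⌈3.5 * L / c⌉₊ with hBdef
    set r := m + 2*B + 1 with hrdef
    refine ⟨Mech 1 r hc, mech_isCOMech 1 r hc, ?_, ?_⟩
    · apply mech_dp 1 r hc
      have : c * (4 * ((1:ℕ):ℝ) + 4) = ε := by
        rw [hcdef]; push_cast; ring
      linarith [this.le]
    · intro x hKx
      apply mech_good 1 r B hc x _ β (le_of_lt hβ0)
      · intro R hE t
        have hu2 := utility2 (J := 1) (r := r) x R hE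
          (nfun_le_min x hKx) (by omega) t
        have hcard : ((Dcard x t).card : ℝ) = ((nfun x (t.1 + 1) : ℤ) : ℝ) := by
          rw [← Dcard_eq x t]
          push_cast
          ring
        show |((runf 1 r x R (t.1+1)).1 : ℝ) - ((Dcard x t).card : ℝ)| ≤ _
        rw [hcard, errcast]
        calc (((((runf 1 r x R (t.1+1)).1 - nfun x (t.1+1)).natAbs : ℕ)) : ℝ)
            ≤ (m : ℝ) := by exact_mod_cast hu2
          _ ≤ min3 := le_min hmd (le_min hmK hms)
          _ ≤ 4000 * min3 := by linarith
      · apply numeric_tail hc hT hT hβ0 hL1 hlog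
        have h1 : 3.5*L/c ≤ (B:ℝ) := Nat.le_ceil _
        have h2 : 3.5*L ≤ (B:ℝ)*c := (div_le_iff₀ hc).1 h1
        nlinarith
  · rcases le_or_gt (1/10 : ℝ) s with hs10 | hs10
    · -- CASE B : main SVT regime
      set r := ⌈200*s⌉₊ + 200 with hrdef
      have hr0 : 0 < r := by omega
      have hr0' : (0:ℝ) < (r:ℝ) := by exact_mod_cast hr0
      set J := min (4*K/r + 1) T with hJdef
      have hJT : J ≤ T := min_le_right _ _
      have hJ0' : (0:ℝ) < 4*(J:ℝ)+4 := by positivity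
      set c := ε/(4*(J:ℝ)+4) with hcdef
      have hc : 0 < c := by positivity
      set B := ⌈3.5*L/c⌉₊ with hBdef
      -- real estimates
      have hrlow : 200*s + 200 ≤ (r:ℝ) := by
        have h1 : 200*s ≤ (⌈200*s⌉₊ : ℝ) := Nat.le_ceil _
        rw [hrdef]
        push_cast
        linarith
      have hrhigh : (r:ℝ) ≤ 200*s + 201 := by
        have h1 : (⌈200*s⌉₊ : ℝ) < 200*s + 1 := Nat.ceil_lt_add_one (by positivity)
        rw [hrdef]
        push_cast
        linarith
      have hJreal : (J:ℝ) ≤ 4*(K:ℝ)/(r:ℝ) + 1 := by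
        have h1 : J ≤ 4*K/r + 1 := min_le_left _ _
        have h2 : ((4*K/r : ℕ):ℝ) ≤ ((4*K : ℕ):ℝ)/(r:ℝ) := Nat.cast_div_le
        calc (J:ℝ) ≤ ((4*K/r + 1 : ℕ):ℝ) := by exact_mod_cast h1
          _ = ((4*K/r : ℕ):ℝ) + 1 := by push_cast; ring
          _ ≤ 4*(K:ℝ)/(r:ℝ) + 1 := by
              have : ((4*K : ℕ):ℝ) = 4*(K:ℝ) := by push_cast; ring
              rw [this] at h2
              linarith
      have hsK : s ≤ (K:ℝ) := le_trans hsm.le hmK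
      have hBreal : (B:ℝ) ≤ 28.28*s + 1 := by
        have h1 : (B:ℝ) < 3.5*L/c + 1 := Nat.ceil_lt_add_one (by positivity)
        have h2 : 3.5*L/c = 3.5*L*(4*(J:ℝ)+4)/ε := by
          rw [hcdef]
          field_simp
        have h3 : 4*(J:ℝ)+4 ≤ 16*(K:ℝ)/(r:ℝ) + 8 := by
          have h16 : 16*(K:ℝ)/(r:ℝ) = 4*(4*(K:ℝ)/(r:ℝ)) := by ring
          rw [h16]
          linarith
        have h4 : 3.5*L*(4*(J:ℝ)+4)/ε ≤ 3.5*L*(16*(K:ℝ)/(r:ℝ) + 8)/ε :=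
          (div_le_div_iff_of_pos_right hε).2 (mul_le_mul_of_nonneg_left h3 (by linarith))
        have h5 : 3.5*L*(16*(K:ℝ)/(r:ℝ) + 8)/ε
            = 56*(ε⁻¹*(K:ℝ)*L)/(r:ℝ) + 28*(ε⁻¹*(K:ℝ)*L)/(K:ℝ) := by
          field_simp
          ring
        have h6 : 56*(ε⁻¹*(K:ℝ)*L)/(r:ℝ) ≤ 0.28*s := by
          rw [← hs2, div_le_iff₀ hr0']
          nlinarith [mul_le_mul_of_nonneg_left hrlow hs0.le, hs0.le]
        have h7 : 28*(ε⁻¹*(K:ℝ)*L)/(K:ℝ) ≤ 28*s := by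
          rw [← hs2, div_le_iff₀ hK']
          nlinarith [mul_le_mul_of_nonneg_left hsK hs0.le, hs0.le]
        linarith
      have h6B : 6*B ≤ r := by
        have hreal : 6*(B:ℝ) ≤ (r:ℝ) := by linarith [hs0.le]
        exact_mod_cast hreal
      refine ⟨Mech J r hc, mech_isCOMech J r hc, ?_, ?_⟩
      · apply mech_dp J r hc
        rw [hcdef, div_mul_cancel₀ _ (ne_of_gt hJ0')]
      · intro x hKx
        have hmin3s : min3 = s := by
          rw [hmin3def, min_eq_right (le_trans hsm.le hmK),
            min_eq_right (le_trans hsm.le hmd)]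
        apply mech_good J r B hc x _ β (le_of_lt hβ0)
        · intro R hE t
          have hu1 := utility1 (J := J) (r := r) x R hE h6B (by omega) hJdef
            (le_trans (TVp_le_updateCount x) hKx) t
          have hcard : ((Dcard x t).card : ℝ) = ((nfun x (t.1 + 1) : ℤ) : ℝ) := by
            rw [← Dcard_eq x t]
            push_cast
            ring
          show |((runf J r x R (t.1+1)).1 : ℝ) - ((Dcard x t).card : ℝ)| ≤ _
          rw [hcard, errcast]
          have hcast : ((((runf J r x R (t.1+1)).1 - nfun x (t.1+1)).natAbs : ℕ) : ℝ)
              ≤ ((r - 1 + 2*B : ℕ) : ℝ) := by exact_mod_cast hu1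
          have hcast2 : ((r - 1 + 2*B : ℕ) : ℝ) ≤ (r:ℝ) + 2*(B:ℝ) := by
            have : (r - 1 + 2*B : ℕ) ≤ r + 2*B := by omega
            calc ((r - 1 + 2*B : ℕ) : ℝ) ≤ ((r + 2*B : ℕ) : ℝ) := by exact_mod_cast this
              _ = (r:ℝ) + 2*(B:ℝ) := by push_cast; ring
          calc ((((runf J r x R (t.1+1)).1 - nfun x (t.1+1)).natAbs : ℕ) : ℝ)
              ≤ (r:ℝ) + 2*(B:ℝ) := le_trans hcast hcast2
            _ ≤ (200*s + 201) + 2*(28.28*s + 1) := by linarith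
            _ ≤ 4000 * s := by linarith [hs10]
            _ = 4000 * min3 := by rw [hmin3s]
        · apply numeric_tail hc hJT hT hβ0 hL1 hlog
          have h1 : 3.5*L/c ≤ (B:ℝ) := Nat.le_ceil _
          have h2 : 3.5*L ≤ (B:ℝ)*c := (div_le_iff₀ hc).1 h1
          nlinarith
    · -- CASE C : exact tracking regime
      set J := min (4*K/1 + 1) T with hJdef
      have hJT : J ≤ T := min_le_right _ _
      have hJ0' : (0:ℝ) < 4*(J:ℝ)+4 := by positivity
      set c := ε/(4*(J:ℝ)+4) with hcdef
      have hc : 0 < c := by positivity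
      have hK1' : (1:ℝ) ≤ (K:ℝ) := by exact_mod_cast hK1
      have hε100 : 100*(K:ℝ)*L < ε := by
        have h1 : ε⁻¹*(K:ℝ)*L < 1/100 := by
          rw [← hs2]
          nlinarith [hs0.le]
        nlinarith [mul_inv_cancel₀ (ne_of_gt hε), hε, hK', hL1]
      have hJ4K : (J:ℝ) ≤ 4*(K:ℝ) + 1 := by
        have h1 : J ≤ 4*K/1 + 1 := min_le_left _ _
        have h3 : J ≤ 4*K + 1 := by omega
        exact_mod_cast h3
      have hcB : 3.5*L ≤ c := by
        rw [hcdef, le_div_iff₀ hJ0']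
        have h1 : 4*(J:ℝ)+4 ≤ 24*(K:ℝ) := by nlinarith [hJ4K, hK1']
        have h2 : 3.5*L*(4*(J:ℝ)+4) ≤ 3.5*L*(24*(K:ℝ)) :=
          mul_le_mul_of_nonneg_left h1 (by linarith)
        nlinarith [hK', hL1]
      refine ⟨Mech J 1 hc, mech_isCOMech J 1 hc, ?_, ?_⟩
      · apply mech_dp J 1 hc
        rw [hcdef, div_mul_cancel₀ _ (ne_of_gt hJ0')]
      · intro x hKx
        apply mech_good J 1 0 hc x _ β (le_of_lt hβ0)
        · intro R hE t
          have hu1 := utility1 (J := J) (r := 1) x R hE (by omega) (by omega) hJdef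
            (le_trans (TVp_le_updateCount x) hKx) t
          have hcard : ((Dcard x t).card : ℝ) = ((nfun x (t.1 + 1) : ℤ) : ℝ) := by
            rw [← Dcard_eq x t]
            push_cast
            ring
          show |((runf J 1 x R (t.1+1)).1 : ℝ) - ((Dcard x t).card : ℝ)| ≤ _
          rw [hcard, errcast]
          have hzero : ((runf J 1 x R (t.1+1)).1 - nfun x (t.1+1)).natAbs = 0 := by
            have := hu1
            omega
          rw [hzero]
          simp only [Nat.cast_zero]
          positivity
        · apply numeric_tail hc hJT hT hβ0 hL1 hlog
          have : c * (((0:ℕ):ℝ) + 1) = c := by norm_num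
          rw [this]
          exact hcB
end

section
/- Let d ≥ 1 be an integer, q ∈ (0,1], α ≥ 0, and let s, c ∈ ℝ^d satisfy max_{i ≤ d} |s_i − c_i| ≤ α. Then |Q_q(s) − Q_q(c)| ≤ α, where Q_q(c) denotes the q-quantile of the vector c. -/
/-- The `p`-quantile of a vector `c ∈ ℝ^d`: the smallest value `c j` such that
at least `p·d` of the coordinates of `c` are `≤ c j`. -/
noncomputable def quantile {d : ℕ} (p : ℝ) (c : Fin d → ℝ) : ℝ :=
  sInf {z : ℝ | ∃ j : Fin d, z = c j ∧ p * d ≤ ({i : Fin d | c i ≤ c j}.ncard : ℝ)}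

lemma quantile_set_finite {d : ℕ} (p : ℝ) (c : Fin d → ℝ) :
    {z : ℝ | ∃ j : Fin d, z = c j ∧ p * d ≤ ({i : Fin d | c i ≤ c j}.ncard : ℝ)}.Finite := by
  apply (Set.finite_range c).subset
  rintro z ⟨j, rfl, -⟩
  exact ⟨j, rfl⟩

lemma quantile_set_nonempty {d : ℕ} (hd : 1 ≤ d) (p : ℝ) (hp : p ∈ Set.Ioc (0 : ℝ) 1)
    (c : Fin d → ℝ) :
    {z : ℝ | ∃ j : Fin d, z = c j ∧ p * d ≤ ({i : Fin d | c i ≤ c j}.ncard : ℝ)}.Nonempty := by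
  haveI : Nonempty (Fin d) := ⟨⟨0, hd⟩⟩
  obtain ⟨j, hj⟩ := Finite.exists_max c
  refine ⟨c j, j, rfl, ?_⟩
  have : {i : Fin d | c i ≤ c j} = Set.univ := Set.eq_univ_of_forall fun i => hj i
  rw [this, Set.ncard_univ]
  simp only [Nat.card_eq_fintype_card, Fintype.card_fin]
  calc p * d ≤ 1 * d := by
        apply mul_le_mul_of_nonneg_right hp.2 (Nat.cast_nonneg d)
    _ = d := one_mul _

lemma quantile_le {d : ℕ} (hd : 1 ≤ d) (p : ℝ) (hp : p ∈ Set.Ioc (0 : ℝ) 1) (α : ℝ)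
    (s c : Fin d → ℝ) (h : ∀ i, s i ≤ c i + α) :
    quantile p s ≤ quantile p c + α := by
  have hmem := (quantile_set_nonempty hd p hp c).csInf_mem (quantile_set_finite p c)
  obtain ⟨j, hj, hcard⟩ := hmem
  set A : Set (Fin d) := {i : Fin d | c i ≤ c j} with hA
  have hAfin : A.Finite := Set.toFinite A
  have hAne : A.Nonempty := ⟨j, by simp [hA]⟩
  obtain ⟨k, hkA, hk⟩ := Set.exists_max_image A s hAfin hAne
  have hsub : A ⊆ {i : Fin d | s i ≤ s k} := fun i hi => hk i hi
  have hcard2 : p * d ≤ ({i : Fin d | s i ≤ s k}.ncard : ℝ) := by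
    refine hcard.trans ?_
    exact_mod_cast Set.ncard_le_ncard hsub (Set.toFinite _)
  have hks : quantile p s ≤ s k := by
    apply csInf_le ((quantile_set_finite p s).bddBelow)
    exact ⟨k, rfl, hcard2⟩
  calc quantile p s ≤ s k := hks
    _ ≤ c k + α := h k
    _ ≤ c j + α := by have : c k ≤ c j := hkA; linarith
    _ = quantile p c + α := by rw [quantile, hj]

theorem quantile_sensitivity {d : ℕ} (hd : 1 ≤ d) (p : ℝ)
    (hp : p ∈ Set.Ioc (0 : ℝ) 1) (α : ℝ) (hα : 0 ≤ α) (s c : Fin d → ℝ)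
    (h : ∀ i, |s i - c i| ≤ α) :
    |quantile p s - quantile p c| ≤ α := by
  rw [abs_sub_le_iff]
  constructor
  · have := quantile_le hd p hp α s c (fun i => by have := abs_le.mp (h i); linarith [this.2])
    linarith
  · have := quantile_le hd p hp α c s (fun i => by have := abs_le.mp (h i); linarith [this.1])
    linarith
end
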